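/- Let M, N : I² → I be means with M ≤ N satisfying |M(x,y)−N(x,y)| < |x−y| for x ≠ y, let Tr be the transfinite invariant mean, and let Φ : I² → ℝ be a continuous function. Then Φ(x,y) = Φ(M(x,y),N(x,y)) for all x,y ∈ I if and only if there exists a continuous function f : I → ℝ with Φ = f ∘ (Tr, Tr), i.e. Φ(x,y) = f(Tr(x,y)) for all x,y (one may take f(t) = Φ(t,t)). -/

import Mathlib

open Ordinal

def IsMean (I : Set ℝ) (M : ℝ → ℝ → ℝ) : Prop :=
  ∀ x ∈ I, ∀ y ∈ I, M x y ∈ I ∧ min x y ≤ M x y ∧ M x y ≤ max x y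

/-- The transfinite orbit of `(x,y)` under `(M,N)`: `x₀ = x`, `y₀ = y`,
`x_{α+1} = M(x_α, y_α)`, `y_{α+1} = N(x_α, y_α)`, and at limit ordinals
`x_α = lim_{β↗α} x_β = sup_{1 ≤ β < α} x_β`, `y_α = lim_{β↗α} y_β = inf_{1 ≤ β < α} y_β`
(for `M ≤ N` the sequences are monotone from index `1` on, so these limits are the
suprema/infima of the tails). -/
noncomputable def tOrbit (M N : ℝ → ℝ → ℝ) (x y : ℝ) (o : Ordinal.{0}) : ℝ × ℝ :=
  Ordinal.limitRecOn o (x, y)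
    (fun _ p => (M p.1 p.2, N p.1 p.2))
    (fun α _ ih =>
      (sSup {t : ℝ | ∃ β : Ordinal, ∃ h : β < α, 1 ≤ β ∧ (ih β h).1 = t},
       sInf {t : ℝ | ∃ β : Ordinal, ∃ h : β < α, 1 ≤ β ∧ (ih β h).2 = t}))


/-- The transfinite invariant mean `Tr(x,y) := x_{ω₁} (= y_{ω₁})`. -/
noncomputable def Tr (M N : ℝ → ℝ → ℝ) (x y : ℝ) : ℝ :=
  (tOrbit M N x y ω₁).1

namespace Stmt17Aux

variable {I : Set ℝ} {M N : ℝ → ℝ → ℝ}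

lemma tOrbit_zero (M N : ℝ → ℝ → ℝ) (x y : ℝ) : tOrbit M N x y 0 = (x, y) :=
  Ordinal.limitRecOn_zero _ _ _

lemma tOrbit_succ (M N : ℝ → ℝ → ℝ) (x y : ℝ) (α : Ordinal) :
    tOrbit M N x y (Order.succ α) =
      (M (tOrbit M N x y α).1 (tOrbit M N x y α).2,
       N (tOrbit M N x y α).1 (tOrbit M N x y α).2) :=
  Ordinal.limitRecOn_succ _ _ _ _

lemma tOrbit_limit (M N : ℝ → ℝ → ℝ) (x y : ℝ) {α : Ordinal} (h : Order.IsSuccLimit α) :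
    tOrbit M N x y α =
      (sSup {t : ℝ | ∃ β : Ordinal, ∃ _ : β < α, 1 ≤ β ∧ (tOrbit M N x y β).1 = t},
       sInf {t : ℝ | ∃ β : Ordinal, ∃ _ : β < α, 1 ≤ β ∧ (tOrbit M N x y β).2 = t}) :=
  Ordinal.limitRecOn_limit _ _ _ _ h

section Props

variable (hI : I.OrdConnected) (hM : IsMean I M) (hN : IsMean I N)
  (hMN : ∀ x ∈ I, ∀ y ∈ I, M x y ≤ N x y)
  {x y : ℝ} (hx : x ∈ I) (hy : y ∈ I)

include hI hM hN hMN hx hy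

/-- Main structural facts about the orbit, proved by transfinite induction. -/
lemma orbit_props (α : Ordinal) :
    (tOrbit M N x y α).1 ∈ I ∧ (tOrbit M N x y α).2 ∈ I ∧
      (1 ≤ α → (tOrbit M N x y α).1 ≤ (tOrbit M N x y α).2) ∧
      (∀ β, 1 ≤ β → β ≤ α →
        (tOrbit M N x y β).1 ≤ (tOrbit M N x y α).1 ∧
        (tOrbit M N x y α).2 ≤ (tOrbit M N x y β).2) := by
  induction α using Ordinal.induction with
  | h α IH =>
  rcases Ordinal.zero_or_succ_or_isSuccLimit α with rfl | ⟨γ, rfl⟩ | hlim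
  · rw [tOrbit_zero]
    refine ⟨hx, hy, ?_, ?_⟩
    · intro h; exact absurd h (by simp)
    · intro β h1 h0
      rw [nonpos_iff_eq_zero] at h0
      subst h0
      exact absurd h1 (by simp)
  · obtain ⟨ha, hb, hab, hmono⟩ := IH γ (Order.lt_succ γ)
    rw [tOrbit_succ]
    set a := (tOrbit M N x y γ).1
    set b := (tOrbit M N x y γ).2
    obtain ⟨hMI, hMmin, hMmax⟩ := hM a ha b hb
    obtain ⟨hNI, hNmin, hNmax⟩ := hN a ha b hb
    refine ⟨hMI, hNI, fun _ => hMN a ha b hb, ?_⟩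
    intro β h1 hβ
    rcases eq_or_lt_of_le hβ with rfl | hlt
    · rw [tOrbit_succ]; exact ⟨le_refl _, le_refl _⟩
    · have hβγ : β ≤ γ := Order.lt_succ_iff.mp hlt
      have h1γ : (1 : Ordinal) ≤ γ := h1.trans hβγ
      have hle : a ≤ b := hab h1γ
      have h2 := hmono β h1 hβγ
      constructor
      · calc (tOrbit M N x y β).1 ≤ a := h2.1
          _ = min a b := (min_eq_left hle).symm
          _ ≤ M a b := hMmin
      · calc N a b ≤ max a b := hNmax
          _ = b := max_eq_right hle
          _ ≤ (tOrbit M N x y β).2 := h2.2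
  · have h1α : (1 : Ordinal) < α := by
      simpa [Ordinal.succ_zero] using hlim.succ_lt hlim.pos
    set S := {t : ℝ | ∃ β : Ordinal, ∃ _ : β < α, 1 ≤ β ∧ (tOrbit M N x y β).1 = t} with hS
    set T := {t : ℝ | ∃ β : Ordinal, ∃ _ : β < α, 1 ≤ β ∧ (tOrbit M N x y β).2 = t} with hT
    have e1 : (tOrbit M N x y α).1 = sSup S := by rw [tOrbit_limit M N x y hlim]
    have e2 : (tOrbit M N x y α).2 = sInf T := by rw [tOrbit_limit M N x y hlim]
    obtain ⟨hx1, hy1, hxy1, _⟩ := IH 1 h1α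
    have hSne : S.Nonempty := ⟨_, 1, h1α, le_refl _, rfl⟩
    have hTne : T.Nonempty := ⟨_, 1, h1α, le_refl _, rfl⟩
    have hSbdd : ∀ t ∈ S, t ≤ (tOrbit M N x y 1).2 := by
      rintro t ⟨β, hβα, h1β, rfl⟩
      obtain ⟨_, _, hle, hmono⟩ := IH β hβα
      exact (hle h1β).trans (hmono 1 (le_refl _) h1β).2
    have hTbdd : ∀ t ∈ T, (tOrbit M N x y 1).1 ≤ t := by
      rintro t ⟨β, hβα, h1β, rfl⟩
      obtain ⟨_, _, hle, hmono⟩ := IH β hβα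
      exact ((hmono 1 (le_refl _) h1β).1).trans (hle h1β)
    have hSbdd' : BddAbove S := ⟨_, hSbdd⟩
    have hTbdd' : BddBelow T := ⟨_, hTbdd⟩
    have hX1le : (tOrbit M N x y 1).1 ≤ sSup S := le_csSup hSbdd' ⟨1, h1α, le_refl _, rfl⟩
    have hXleY1 : sSup S ≤ (tOrbit M N x y 1).2 := csSup_le hSne hSbdd
    have hYleY1 : sInf T ≤ (tOrbit M N x y 1).2 := csInf_le hTbdd' ⟨1, h1α, le_refl _, rfl⟩
    have hX1leY : (tOrbit M N x y 1).1 ≤ sInf T := le_csInf hTne hTbdd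
    have hXY : sSup S ≤ sInf T := by
      apply csSup_le hSne
      rintro t ⟨β, hβα, h1β, rfl⟩
      apply le_csInf hTne
      rintro s ⟨γ, hγα, h1γ, rfl⟩
      set δ := max β γ with hδ
      have hδα : δ < α := max_lt hβα hγα
      obtain ⟨_, _, hle, hmono⟩ := IH δ hδα
      have h1δ : (1 : Ordinal) ≤ δ := h1β.trans (le_max_left _ _)
      calc (tOrbit M N x y β).1 ≤ (tOrbit M N x y δ).1 := (hmono β h1β (le_max_left _ _)).1
        _ ≤ (tOrbit M N x y δ).2 := hle h1δ
        _ ≤ (tOrbit M N x y γ).2 := (hmono γ h1γ (le_max_right _ _)).2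
    rw [e1, e2]
    refine ⟨hI.out hx1 hy1 ⟨hX1le, hXleY1⟩, hI.out hx1 hy1 ⟨hX1leY, hYleY1⟩,
      fun _ => hXY, ?_⟩
    intro β h1 hβ
    rcases eq_or_lt_of_le hβ with rfl | hlt
    · rw [e1, e2]; exact ⟨le_refl _, le_refl _⟩
    · exact ⟨le_csSup hSbdd' ⟨β, hlt, h1, rfl⟩, csInf_le hTbdd' ⟨β, hlt, h1, rfl⟩⟩

/-- once the orbit hits the diagonal it stays there -/
lemma orbit_const {α : Ordinal} {t : ℝ} (h1 : 1 ≤ α)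
    (ht : tOrbit M N x y α = (t, t)) (htI : t ∈ I) :
    ∀ β, α ≤ β → tOrbit M N x y β = (t, t) := by
  intro β hβ
  induction β using Ordinal.induction with
  | h β IH =>
  rcases eq_or_lt_of_le hβ with rfl | hαβ
  · exact ht
  rcases Ordinal.zero_or_succ_or_isSuccLimit β with rfl | ⟨γ, rfl⟩ | hlim
  · exact absurd hαβ (by simp)
  · have hαγ : α ≤ γ := Order.lt_succ_iff.mp hαβ
    have hγ : tOrbit M N x y γ = (t, t) := IH γ (Order.lt_succ γ) hαγ
    rw [tOrbit_succ, hγ]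
    obtain ⟨_, hMmin, hMmax⟩ := hM t htI t htI
    obtain ⟨_, hNmin, hNmax⟩ := hN t htI t htI
    simp only [min_self, max_self] at hMmin hMmax hNmin hNmax
    simp [le_antisymm hMmax hMmin, le_antisymm hNmax hNmin]
  · have e1 : (tOrbit M N x y β).1 =
        sSup {s : ℝ | ∃ γ : Ordinal, ∃ _ : γ < β, 1 ≤ γ ∧ (tOrbit M N x y γ).1 = s} := by
      rw [tOrbit_limit M N x y hlim]
    have e2 : (tOrbit M N x y β).2 =
        sInf {s : ℝ | ∃ γ : Ordinal, ∃ _ : γ < β, 1 ≤ γ ∧ (tOrbit M N x y γ).2 = s} := by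
      rw [tOrbit_limit M N x y hlim]
    have hboundX : ∀ s ∈ {s : ℝ | ∃ γ : Ordinal, ∃ _ : γ < β, 1 ≤ γ ∧
        (tOrbit M N x y γ).1 = s}, s ≤ t := by
      rintro s ⟨γ, hγβ, h1γ, rfl⟩
      rcases le_total γ α with h | h
      · have := ((orbit_props hI hM hN hMN hx hy α).2.2.2 γ h1γ h).1
        rwa [ht] at this
      · rw [IH γ hγβ h]
    have hboundY : ∀ s ∈ {s : ℝ | ∃ γ : Ordinal, ∃ _ : γ < β, 1 ≤ γ ∧
        (tOrbit M N x y γ).2 = s}, t ≤ s := by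
      rintro s ⟨γ, hγβ, h1γ, rfl⟩
      rcases le_total γ α with h | h
      · have := ((orbit_props hI hM hN hMN hx hy α).2.2.2 γ h1γ h).2
        rwa [ht] at this
      · rw [IH γ hγβ h]
    have hmemX : t ∈ {s : ℝ | ∃ γ : Ordinal, ∃ _ : γ < β, 1 ≤ γ ∧
        (tOrbit M N x y γ).1 = s} := ⟨α, hαβ, h1, by rw [ht]⟩
    have hmemY : t ∈ {s : ℝ | ∃ γ : Ordinal, ∃ _ : γ < β, 1 ≤ γ ∧
        (tOrbit M N x y γ).2 = s} := ⟨α, hαβ, h1, by rw [ht]⟩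
    have hXt : (tOrbit M N x y β).1 = t := by
      rw [e1]
      exact le_antisymm (csSup_le ⟨t, hmemX⟩ hboundX) (le_csSup ⟨t, hboundX⟩ hmemX)
    have hYt : (tOrbit M N x y β).2 = t := by
      rw [e2]
      exact le_antisymm (csInf_le ⟨t, hboundY⟩ hmemY) (le_csInf ⟨t, hmemY⟩ hboundY)
    exact Prod.ext hXt hYt

end Props

lemma one_add_lt_omega1 {α : Ordinal} (h : α < ω₁) : 1 + α < ω₁ := by
  rw [← Cardinal.ord_aleph] at h ⊢
  rw [Cardinal.lt_ord] at h ⊢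
  rw [Ordinal.card_add, Ordinal.card_one]
  exact Cardinal.add_lt_of_lt (Cardinal.aleph0_le_aleph 1)
    (Cardinal.one_lt_aleph0.trans_le (Cardinal.aleph0_le_aleph 1)) h

section Fixed

variable (hI : I.OrdConnected) (hM : IsMean I M) (hN : IsMean I N)
  (hMN : ∀ x ∈ I, ∀ y ∈ I, M x y ≤ N x y)
  (hcontr : ∀ x ∈ I, ∀ y ∈ I, x ≠ y → |M x y - N x y| < |x - y|)
  {x y : ℝ} (hx : x ∈ I) (hy : y ∈ I)

include hI hM hN hMN hx hy

lemma exists_succ_eq :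
    ∃ α : Ordinal, 1 ≤ α ∧ α < ω₁ ∧
      tOrbit M N x y (Order.succ α) = tOrbit M N x y α := by
  by_contra hcon
  push_neg at hcon
  have hd : ∀ α : Ordinal, 1 ≤ α → α < ω₁ →
      (tOrbit M N x y (Order.succ α)).2 - (tOrbit M N x y (Order.succ α)).1 <
        (tOrbit M N x y α).2 - (tOrbit M N x y α).1 := by
    intro α h1 hω
    have hm := (orbit_props hI hM hN hMN hx hy (Order.succ α)).2.2.2 α h1 (Order.le_succ α)
    have hne := hcon α h1 hω
    rcases eq_or_lt_of_le hm.1 with he | hl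
    · rcases eq_or_lt_of_le hm.2 with he2 | hl2
      · exact absurd (Prod.ext he.symm he2) hne
      · linarith [hm.1]
    · linarith [hm.2]
  have hanti : ∀ β γ : Ordinal, 1 ≤ β → β ≤ γ →
      (tOrbit M N x y γ).2 - (tOrbit M N x y γ).1 ≤
        (tOrbit M N x y β).2 - (tOrbit M N x y β).1 := by
    intro β γ h1 h2
    have := (orbit_props hI hM hN hMN hx hy γ).2.2.2 β h1 h2
    linarith [this.1, this.2]
  have hrat : ∀ α : (Set.Iio (ω₁ : Ordinal)), ∃ q : ℚ,
      (tOrbit M N x y (Order.succ (1 + α.1))).2 - (tOrbit M N x y (Order.succ (1 + α.1))).1 < q ∧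
      (q : ℝ) < (tOrbit M N x y (1 + α.1)).2 - (tOrbit M N x y (1 + α.1)).1 := by
    intro ⟨α, hα⟩
    exact exists_rat_btwn (hd (1 + α) (le_self_add : (1 : Ordinal) ≤ 1 + α) (one_add_lt_omega1 hα))
  choose g hg1 hg2 using hrat
  have hstrict : StrictAnti g := by
    intro a b hab
    have h1 : (1 : Ordinal) + a.1 < 1 + b.1 := by
      rwa [add_lt_add_iff_left]
    have hsucc : Order.succ (1 + a.1) ≤ 1 + b.1 := Order.succ_le_of_lt h1
    have : (g b : ℝ) < g a := by
      calc (g b : ℝ) < (tOrbit M N x y (1 + b.1)).2 - (tOrbit M N x y (1 + b.1)).1 := hg2 b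
        _ ≤ (tOrbit M N x y (Order.succ (1 + a.1))).2 -
              (tOrbit M N x y (Order.succ (1 + a.1))).1 :=
          hanti _ _ ((le_self_add : (1 : Ordinal) ≤ 1 + a.1).trans (Order.le_succ _)) hsucc
        _ < g a := hg1 a
    exact_mod_cast this
  have hcount : Countable (Set.Iio (ω₁ : Ordinal)) := hstrict.injective.countable
  have hle : Cardinal.mk (Set.Iio (ω₁ : Ordinal)) ≤ Cardinal.aleph0 :=
    Cardinal.mk_le_aleph0_iff.mpr hcount
  rw [Ordinal.mk_Iio_ordinal, Ordinal.card_omega, ← Cardinal.lift_aleph0.{1, 0}] at hle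
  exact absurd (Cardinal.lift_le.mp hle) (not_le.mpr Cardinal.aleph0_lt_aleph_one)

include hcontr in
/-- the orbit stabilizes at the diagonal strictly before `ω₁`, and in particular
`x_{ω₁} = y_{ω₁} = Tr x y`. -/
lemma tr_spec :
    ∃ t : ℝ, t ∈ I ∧ (∃ α : Ordinal, 1 ≤ α ∧ α < ω₁ ∧
      ∀ β, α ≤ β → tOrbit M N x y β = (t, t)) := by
  obtain ⟨α, h1, hω, hfix⟩ := exists_succ_eq hI hM hN hMN hx hy
  obtain ⟨hXI, hYI, hXY, _⟩ := orbit_props hI hM hN hMN hx hy α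
  set a := (tOrbit M N x y α).1
  set b := (tOrbit M N x y α).2
  have hMa : M a b = a := by
    have := congrArg Prod.fst (tOrbit_succ M N x y α)
    rw [hfix] at this
    exact this.symm
  have hNb : N a b = b := by
    have := congrArg Prod.snd (tOrbit_succ M N x y α)
    rw [hfix] at this
    exact this.symm
  have hab : a = b := by
    by_contra hne
    have := hcontr a hXI b hYI hne
    rw [hMa, hNb] at this
    exact absurd this (lt_irrefl _)
  refine ⟨a, hXI, α, h1, hω, ?_⟩
  exact orbit_const hI hM hN hMN hx hy h1 (Prod.ext rfl hab.symm) hXI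

omit hI hM hN hMN hx hy in
lemma tr_eq (t : ℝ) (α : Ordinal) (hα : α < ω₁)
    (h : ∀ β, α ≤ β → tOrbit M N x y β = (t, t)) :
    Tr M N x y = t ∧ tOrbit M N x y ω₁ = (t, t) := by
  have := h ω₁ hα.le
  exact ⟨by rw [Tr, this], this⟩

end Fixed

section Phi

variable (hI : I.OrdConnected) (hM : IsMean I M) (hN : IsMean I N)
  (hMN : ∀ x ∈ I, ∀ y ∈ I, M x y ≤ N x y)
  {Φ : ℝ → ℝ → ℝ} (hΦ : ContinuousOn (fun p : ℝ × ℝ => Φ p.1 p.2) (I ×ˢ I))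
  (hinv : ∀ x ∈ I, ∀ y ∈ I, Φ x y = Φ (M x y) (N x y))
  {x y : ℝ} (hx : x ∈ I) (hy : y ∈ I)

include hI hM hN hMN hΦ hinv hx hy

lemma phi_invariant (α : Ordinal) :
    Φ (tOrbit M N x y α).1 (tOrbit M N x y α).2 = Φ x y := by
  induction α using Ordinal.induction with
  | h α IH =>
  rcases Ordinal.zero_or_succ_or_isSuccLimit α with rfl | ⟨γ, rfl⟩ | hlim
  · rw [tOrbit_zero]
  · obtain ⟨ha, hb, _, _⟩ := orbit_props hI hM hN hMN hx hy γ
    rw [tOrbit_succ]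
    rw [← hinv _ ha _ hb]
    exact IH γ (Order.lt_succ γ)
  · -- limit case: ε-δ argument using continuity of Φ
    have h1α : (1 : Ordinal) < α := by
      simpa [Ordinal.succ_zero] using hlim.succ_lt hlim.pos
    obtain ⟨hXI, hYI, _, hmono⟩ := orbit_props hI hM hN hMN hx hy α
    set a := (tOrbit M N x y α).1 with ha
    set b := (tOrbit M N x y α).2 with hb
    have hc : ContinuousWithinAt (fun p : ℝ × ℝ => Φ p.1 p.2) (I ×ˢ I) (a, b) :=
      hΦ.continuousWithinAt (Set.mk_mem_prod hXI hYI)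
    rw [Metric.continuousWithinAt_iff] at hc
    by_contra hne
    have hpos : 0 < dist (Φ a b) (Φ x y) := dist_pos.mpr hne
    obtain ⟨δ, hδ, hcont⟩ := hc _ hpos
    set S := {t : ℝ | ∃ β : Ordinal, ∃ _ : β < α, 1 ≤ β ∧ (tOrbit M N x y β).1 = t} with hS
    set T := {t : ℝ | ∃ β : Ordinal, ∃ _ : β < α, 1 ≤ β ∧ (tOrbit M N x y β).2 = t} with hT
    have e1 : a = sSup S := by rw [ha, tOrbit_limit M N x y hlim]
    have e2 : b = sInf T := by rw [hb, tOrbit_limit M N x y hlim]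
    have hSne : S.Nonempty := ⟨_, 1, h1α, le_refl _, rfl⟩
    have hTne : T.Nonempty := ⟨_, 1, h1α, le_refl _, rfl⟩
    obtain ⟨s, hsS, hs⟩ : ∃ s ∈ S, a - δ < s := by
      apply exists_lt_of_lt_csSup hSne
      rw [← e1]; linarith
    obtain ⟨r, hrT, hr⟩ : ∃ r ∈ T, r < b + δ := by
      apply exists_lt_of_csInf_lt hTne
      rw [← e2]; linarith
    obtain ⟨β₁, hβ₁α, h1β₁, rfl⟩ := hsS
    obtain ⟨β₂, hβ₂α, h1β₂, rfl⟩ := hrT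
    set β := max β₁ β₂ with hβ
    have hβα : β < α := max_lt hβ₁α hβ₂α
    have h1β : (1 : Ordinal) ≤ β := h1β₁.trans (le_max_left _ _)
    obtain ⟨hXβ, hYβ, _, hmonoβ⟩ := orbit_props hI hM hN hMN hx hy β
    have hXa : (tOrbit M N x y β).1 ≤ a := (hmono β h1β hβα.le).1
    have hbY : b ≤ (tOrbit M N x y β).2 := (hmono β h1β hβα.le).2
    have hX1 : a - δ < (tOrbit M N x y β).1 :=
      lt_of_lt_of_le hs (hmonoβ β₁ h1β₁ (le_max_left _ _)).1
    have hY1 : (tOrbit M N x y β).2 < b + δ :=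
      lt_of_le_of_lt (hmonoβ β₂ h1β₂ (le_max_right _ _)).2 hr
    have hdist : dist ((tOrbit M N x y β).1, (tOrbit M N x y β).2) (a, b) < δ := by
      rw [Prod.dist_eq]
      apply max_lt
      · rw [Real.dist_eq, abs_lt]; constructor <;> linarith
      · rw [Real.dist_eq, abs_lt]; constructor <;> linarith
    have h2 : dist (Φ (tOrbit M N x y β).1 (tOrbit M N x y β).2) (Φ a b) <
        dist (Φ a b) (Φ x y) := hcont (Set.mk_mem_prod hXβ hYβ) hdist
    rw [IH β hβα, dist_comm] at h2
    exact absurd h2 (lt_irrefl _)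

end Phi

section Shift

variable (hI : I.OrdConnected) (hM : IsMean I M) (hN : IsMean I N)
  (hMN : ∀ x ∈ I, ∀ y ∈ I, M x y ≤ N x y)
  {x y : ℝ} (hx : x ∈ I) (hy : y ∈ I)

include hI hM hN hMN hx hy

lemma orbit_shift (α : Ordinal) :
    tOrbit M N (M x y) (N x y) α = tOrbit M N x y (1 + α) := by
  induction α using Ordinal.induction with
  | h α IH =>
  rcases Ordinal.zero_or_succ_or_isSuccLimit α with rfl | ⟨γ, rfl⟩ | hlim
  · rw [tOrbit_zero, add_zero, ← Ordinal.succ_zero, tOrbit_succ, tOrbit_zero]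
  · rw [tOrbit_succ, IH γ (Order.lt_succ γ), Ordinal.add_succ, tOrbit_succ]
  · have hωα : (ω : Ordinal) ≤ α := Ordinal.omega0_le_of_isSuccLimit hlim
    have h1α : (1 : Ordinal) < α := by
      simpa [Ordinal.succ_zero] using hlim.succ_lt hlim.pos
    have hone : 1 + α = α := Ordinal.one_add_of_omega0_le hωα
    rw [hone]
    set S' := {t : ℝ | ∃ β : Ordinal, ∃ _ : β < α, 1 ≤ β ∧
      (tOrbit M N (M x y) (N x y) β).1 = t} with hS'
    set T' := {t : ℝ | ∃ β : Ordinal, ∃ _ : β < α, 1 ≤ β ∧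
      (tOrbit M N (M x y) (N x y) β).2 = t} with hT'
    set S := {t : ℝ | ∃ β : Ordinal, ∃ _ : β < α, 1 ≤ β ∧ (tOrbit M N x y β).1 = t} with hS
    set T := {t : ℝ | ∃ β : Ordinal, ∃ _ : β < α, 1 ≤ β ∧ (tOrbit M N x y β).2 = t} with hT
    have hsub1 : S' ⊆ S := by
      rintro t ⟨β, hβα, h1β, rfl⟩
      refine ⟨1 + β, ?_, (le_self_add : (1 : Ordinal) ≤ 1 + β), ?_⟩
      · calc 1 + β < 1 + α := by rwa [add_lt_add_iff_left]
          _ = α := hone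
      · rw [← IH β hβα]
    have hsub2 : T' ⊆ T := by
      rintro t ⟨β, hβα, h1β, rfl⟩
      refine ⟨1 + β, ?_, (le_self_add : (1 : Ordinal) ≤ 1 + β), ?_⟩
      · calc 1 + β < 1 + α := by rwa [add_lt_add_iff_left]
          _ = α := hone
      · rw [← IH β hβα]
    have hS'ne : S'.Nonempty := ⟨_, 1, h1α, le_refl _, rfl⟩
    have hT'ne : T'.Nonempty := ⟨_, 1, h1α, le_refl _, rfl⟩
    have hSne : S.Nonempty := ⟨_, 1, h1α, le_refl _, rfl⟩
    have hTne : T.Nonempty := ⟨_, 1, h1α, le_refl _, rfl⟩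
    have hSbdd : BddAbove S := by
      refine ⟨(tOrbit M N x y 1).2, ?_⟩
      rintro t ⟨β, hβα, h1β, rfl⟩
      obtain ⟨_, _, hle, hmono⟩ := orbit_props hI hM hN hMN hx hy β
      exact (hle h1β).trans (hmono 1 (le_refl _) h1β).2
    have hTbdd : BddBelow T := by
      refine ⟨(tOrbit M N x y 1).1, ?_⟩
      rintro t ⟨β, hβα, h1β, rfl⟩
      obtain ⟨_, _, hle, hmono⟩ := orbit_props hI hM hN hMN hx hy β
      exact ((hmono 1 (le_refl _) h1β).1).trans (hle h1β)
    have hS'bdd : BddAbove S' := hSbdd.mono hsub1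
    have hT'bdd : BddBelow T' := hTbdd.mono hsub2
    have hsup : sSup S' = sSup S := by
      apply le_antisymm (csSup_le_csSup hSbdd hS'ne hsub1)
      apply csSup_le hSne
      rintro t ⟨β, hβα, h1β, rfl⟩
      have hβ1β : (tOrbit M N x y β).1 ≤ (tOrbit M N x y (1 + β)).1 := by
        have h1βα : 1 + β < α := by
          calc 1 + β < 1 + α := by rwa [add_lt_add_iff_left]
            _ = α := hone
        exact ((orbit_props hI hM hN hMN hx hy (1 + β)).2.2.2 β h1β
          (le_add_self : β ≤ 1 + β)).1
      refine hβ1β.trans (le_csSup hS'bdd ⟨β, hβα, h1β, ?_⟩)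
      rw [IH β hβα]
    have hinf : sInf T' = sInf T := by
      apply le_antisymm
      · apply le_csInf hTne
        rintro t ⟨β, hβα, h1β, rfl⟩
        have hβ1β : (tOrbit M N x y (1 + β)).2 ≤ (tOrbit M N x y β).2 := by
          exact ((orbit_props hI hM hN hMN hx hy (1 + β)).2.2.2 β h1β
            (le_add_self : β ≤ 1 + β)).2
        refine le_trans (csInf_le hT'bdd ⟨β, hβα, h1β, ?_⟩) hβ1β
        rw [IH β hβα]
      · exact le_csInf hT'ne fun t ht => csInf_le hTbdd (hsub2 ht)
    rw [tOrbit_limit M N (M x y) (N x y) hlim, tOrbit_limit M N x y hlim]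
    rw [← hS', ← hT', ← hS, ← hT, hsup, hinf]

lemma tr_shift : Tr M N (M x y) (N x y) = Tr M N x y := by
  rw [Tr, Tr, orbit_shift hI hM hN hMN hx hy,
    Ordinal.one_add_of_omega0_le (Ordinal.omega0_le_omega 1)]

end Shift

end Stmt17Aux

open Stmt17Aux in
theorem stmt17 (I : Set ℝ) (hI : I.OrdConnected) (M N : ℝ → ℝ → ℝ)
    (hM : IsMean I M) (hN : IsMean I N)
    (hMN : ∀ x ∈ I, ∀ y ∈ I, M x y ≤ N x y)
    (hcontr : ∀ x ∈ I, ∀ y ∈ I, x ≠ y → |M x y - N x y| < |x - y|)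
    (Φ : ℝ → ℝ → ℝ) (hΦ : ContinuousOn (fun p : ℝ × ℝ => Φ p.1 p.2) (I ×ˢ I)) :
    (∀ x ∈ I, ∀ y ∈ I, Φ x y = Φ (M x y) (N x y)) ↔
      ∃ f : ℝ → ℝ, ContinuousOn f I ∧
        ∀ x ∈ I, ∀ y ∈ I, Φ x y = f (Tr M N x y) := by
  constructor
  · intro hinv
    refine ⟨fun t => Φ t t, ?_, ?_⟩
    · have : ContinuousOn ((fun p : ℝ × ℝ => Φ p.1 p.2) ∘ fun t : ℝ => (t, t)) I :=
        hΦ.comp ((continuous_id.prodMk continuous_id).continuousOn)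
          (fun t ht => Set.mk_mem_prod ht ht)
      exact this
    · intro x hx y hy
      obtain ⟨t, htI, α, h1α, hαω, hfix⟩ := tr_spec hI hM hN hMN hcontr hx hy
      obtain ⟨htr, horb⟩ := tr_eq (M := M) (N := N) (x := x) (y := y) t α hαω hfix
      rw [htr]
      have := phi_invariant hI hM hN hMN hΦ hinv hx hy ω₁
      rw [horb] at this
      exact this.symm
  · rintro ⟨f, _, hfeq⟩ x hx y hy
    have hMI : M x y ∈ I := (hM x hx y hy).1
    have hNI : N x y ∈ I := (hN x hx y hy).1
    rw [hfeq x hx y hy, hfeq (M x y) hMI (N x y) hNI,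
      tr_shift hI hM hN hMN hx hy]
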